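/- Let $n \ge 3$ and $k \ge n-2$ with $k \le n$. Write points of $\mathbb{R}^n$ as $(y,z) \in \mathbb{R}^k \times \mathbb{R}^{n-k}$. Then for any $x \in \mathbb{R}^n$, $$\int_{\{\tilde{x} = (\tilde{y},\tilde{z}) : |\tilde{z}| < 1\}} \frac{d\tilde{x}}{|x - \tilde{x}|^{n-2}} = +\infty.$$ -/

import Mathlib

open Real MeasureTheory

/-- The norm of the "z-part" of a point of `ℝ^n`, i.e. of its last `n - k` coordinates. -/
noncomputable def zNorm {n : ℕ} (k : ℕ) (x : EuclideanSpace ℝ (Fin n)) : ℝ :=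
  Real.sqrt (∑ i ∈ Finset.univ.filter (fun i : Fin n => k ≤ (i : ℕ)), (x i) ^ 2)

/-- Auxiliary boxes: a product of intervals, contained in the slab `{zNorm k t < 1}`,
whose first `n - 2` sides have length `2 ^ m` and remaining sides length `2 / n`. -/
private def slabBox {n : ℕ} (k : ℕ) (x : EuclideanSpace ℝ (Fin n)) (m : ℕ) (i : Fin n) :
    Set ℝ :=
  if (i : ℕ) < n - 2 then Set.Ioo (x i + 2 ^ m) (x i + 2 ^ (m + 1))
  else if (i : ℕ) < k then Set.Ioo (x i) (x i + 2 / n)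
  else Set.Ioo (-(1 / n)) (1 / n)

private def slabB {n : ℕ} (k : ℕ) (x : EuclideanSpace ℝ (Fin n)) (m : ℕ) :
    Set (EuclideanSpace ℝ (Fin n)) :=
  {t | ∀ i, t i ∈ slabBox k x m i}

theorem stmt_4 {n k : ℕ} (hn : 3 ≤ n) (hk : n - 2 ≤ k) (hkn : k ≤ n)
    (x : EuclideanSpace ℝ (Fin n)) :
    ∫⁻ t in {t : EuclideanSpace ℝ (Fin n) | zNorm k t < 1},
      ENNReal.ofReal (1 / ‖x - t‖ ^ ((n : ℝ) - 2)) = ⊤ := by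
  have hnR : (3 : ℝ) ≤ n := by exact_mod_cast hn
  have hn0 : (0 : ℝ) < n := by linarith
  set p : ℝ := (n : ℝ) - 2 with hp_def
  have hp : 0 < p := by simp only [hp_def]; linarith
  have hpcast : ((n - 2 : ℕ) : ℝ) = p := by
    have : (2 : ℕ) ≤ n := by omega
    push_cast [Nat.cast_sub this]; ring
  set D : ℝ := 2 + ∑ i, |x i| with hD_def
  have hD2 : 2 ≤ D := le_add_of_nonneg_right (Finset.sum_nonneg fun i _ => abs_nonneg _)
  have hD0 : 0 < D := by linarith
  set E : ℝ := Real.sqrt n * D with hE_def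
  have hE0 : 0 < E := mul_pos (Real.sqrt_pos.mpr hn0) hD0
  set B : ℕ → Set (EuclideanSpace ℝ (Fin n)) := slabB k x with hB_def
  set f : EuclideanSpace ℝ (Fin n) → ENNReal :=
    fun t => ENNReal.ofReal (1 / ‖x - t‖ ^ p) with hf_def
  set ε : ℝ := (2 / n) ^ 2 * (1 / E ^ p) with hε_def
  have hε0 : 0 < ε := by positivity
  -- each box as a preimage of a product set
  have hBpi : ∀ m, B m = (MeasurableEquiv.toLp 2 (Fin n → ℝ)).symm ⁻¹'
      (Set.univ.pi (slabBox k x m)) := by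
    intro m
    ext t; simp [hB_def, slabB, Set.mem_pi]
  have hBmeas : ∀ m, MeasurableSet (B m) := by
    intro m
    rw [hBpi m]
    exact (MeasurableEquiv.toLp 2 (Fin n → ℝ)).symm.measurable
      (MeasurableSet.univ_pi fun i => by
        unfold slabBox; split_ifs <;> exact measurableSet_Ioo)
  -- volume of each box
  have hvol : ∀ m, volume (B m) = ENNReal.ofReal (((2 : ℝ) ^ m) ^ (n - 2) * (2 / n) ^ 2) := by
    intro m
    rw [hBpi m, (EuclideanSpace.volume_preserving_symm_measurableEquiv_toLp (Fin n)).measure_preimage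
      ((MeasurableSet.univ_pi fun i => by
        unfold slabBox; split_ifs <;> exact measurableSet_Ioo).nullMeasurableSet),
      volume_pi_pi]
    have hlen : ∀ i : Fin n, volume (slabBox k x m i)
        = ENNReal.ofReal (if (i : ℕ) < n - 2 then (2 : ℝ) ^ m else 2 / n) := by
      intro i
      unfold slabBox
      split_ifs with h1 h2
      · rw [Real.volume_Ioo]; congr 1; ring
      · rw [Real.volume_Ioo]; congr 1; ring
      · rw [Real.volume_Ioo]; congr 1; ring
    simp only [hlen]
    rw [← ENNReal.ofReal_prod_of_nonneg (fun i _ => by split_ifs <;> positivity)]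
    congr 1
    rw [Finset.prod_ite _ _, Finset.prod_const, Finset.prod_const]
    have hcard1 : (Finset.univ.filter fun i : Fin n => (i : ℕ) < n - 2).card = n - 2 := by
      have h2 : n - 2 < n := by omega
      have : (Finset.univ.filter fun i : Fin n => (i : ℕ) < n - 2)
          = Finset.Iio (⟨n - 2, h2⟩ : Fin n) := by
        ext i; simp [Fin.lt_def]
      rw [this, Fin.card_Iio]
    have hcard2 : (Finset.univ.filter fun i : Fin n => ¬(i : ℕ) < n - 2).card = 2 := by
      have := Finset.card_filter_add_card_filter_not
        (s := (Finset.univ : Finset (Fin n))) (p := fun i : Fin n => (i : ℕ) < n - 2)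
      rw [Finset.card_univ, Fintype.card_fin] at this
      omega
    rw [hcard1, hcard2]
  -- boxes sit inside the slab
  have hsub : ∀ m, B m ⊆ {t : EuclideanSpace ℝ (Fin n) | zNorm k t < 1} := by
    intro m t ht
    simp only [Set.mem_setOf_eq, zNorm]
    refine Real.sqrt_lt' one_pos |>.mpr ?_
    have hterm : ∀ i ∈ Finset.univ.filter (fun i : Fin n => k ≤ (i : ℕ)),
        (t i) ^ 2 ≤ (1 / n) ^ 2 := by
      intro i hi
      rw [Finset.mem_filter] at hi
      have hki : k ≤ (i : ℕ) := hi.2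
      have h1 : ¬ ((i : ℕ) < n - 2) := by omega
      have h2 : ¬ ((i : ℕ) < k) := by omega
      have := ht i
      simp only [slabBox, h1, h2, if_false, Set.mem_Ioo] at this
      exact sq_le_sq' (by linarith [this.1]) this.2.le
    calc ∑ i ∈ Finset.univ.filter (fun i : Fin n => k ≤ (i : ℕ)), (t i) ^ 2
        ≤ ∑ _i ∈ Finset.univ.filter (fun i : Fin n => k ≤ (i : ℕ)), (1 / (n:ℝ)) ^ 2 :=
          Finset.sum_le_sum hterm
      _ = ((Finset.univ.filter (fun i : Fin n => k ≤ (i : ℕ))).card : ℝ) * (1 / n) ^ 2 := by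
          rw [Finset.sum_const, nsmul_eq_mul]
      _ ≤ (n : ℝ) * (1 / n) ^ 2 := by
          apply mul_le_mul_of_nonneg_right _ (by positivity)
          exact_mod_cast (Finset.card_filter_le _ _).trans_eq (by simp)
      _ = 1 / n := by field_simp
      _ < 1 ^ 2 := by rw [one_pow, div_lt_one hn0]; linarith
  -- boxes are pairwise disjoint
  have hdisj : Pairwise (Function.onFun Disjoint B) := by
    have H : ∀ a b : ℕ, a < b → Disjoint (B a) (B b) := by
      intro a b hab
      rw [Set.disjoint_left]
      intro t hta htb
      have hi0 : (0 : ℕ) < n - 2 := by omega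
      set i0 : Fin n := ⟨0, by omega⟩ with hi0_def
      have h1 := hta i0
      have h2 := htb i0
      simp only [slabBox, hi0_def, hi0, if_true, Set.mem_Ioo] at h1 h2
      have hpow : (2 : ℝ) ^ (a + 1) ≤ 2 ^ b := by
        apply pow_le_pow_right₀ (by norm_num) (by omega)
      linarith [h1.2, h2.1]
    intro a b hab
    rcases hab.lt_or_gt with h | h
    · exact H a b h
    · exact (H b a h).symm
  -- lower bound on the integral over each box
  have key : ∀ m : ℕ, ENNReal.ofReal ε ≤ ∫⁻ t in B m, f t := by
    intro m
    have h2m : (1 : ℝ) ≤ 2 ^ m := one_le_pow₀ (by norm_num)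
    have h2m0 : (0 : ℝ) < 2 ^ m := by positivity
    have hbound : ∀ t ∈ B m, ENNReal.ofReal (1 / (E * 2 ^ m) ^ p) ≤ f t := by
      intro t ht
      have hcoord : ∀ i : Fin n, |x i - t i| ≤ D * 2 ^ m := by
        intro i
        have hti := ht i
        by_cases h1 : (i : ℕ) < n - 2
        · simp only [slabBox, h1, if_true, Set.mem_Ioo] at hti
          rw [abs_sub_comm, abs_of_pos (by linarith)]
          have : (2 : ℝ) ^ (m + 1) = 2 * 2 ^ m := by ring
          nlinarith
        · by_cases h2 : (i : ℕ) < k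
          · simp only [slabBox, h1, h2, if_true, if_false, Set.mem_Ioo] at hti
            rw [abs_sub_comm, abs_of_pos (by linarith)]
            have h2n : (2 : ℝ) / n ≤ 1 := by rw [div_le_one hn0]; linarith
            nlinarith
          · simp only [slabBox, h1, h2, if_false, Set.mem_Ioo] at hti
            have hxi : |x i| ≤ ∑ j, |x j| :=
              Finset.single_le_sum (fun j _ => abs_nonneg (x j)) (Finset.mem_univ i)
            have hti' : |t i| ≤ 1 / n := by
              rw [abs_le]; constructor <;> linarith [hti.1, hti.2]
            have h1n : (1 : ℝ) / n ≤ 1 := by rw [div_le_one hn0]; linarith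
            calc |x i - t i| ≤ |x i| + |t i| := abs_sub _ _
              _ ≤ (∑ j, |x j|) + 1 := by linarith
              _ ≤ D := by rw [hD_def]; linarith
              _ ≤ D * 2 ^ m := le_mul_of_one_le_right hD0.le h2m
      have hnorm_le : ‖x - t‖ ≤ E * 2 ^ m := by
        have hxt : ‖x - t‖ = Real.sqrt (∑ i, (x i - t i) ^ 2) := by
          rw [EuclideanSpace.norm_eq]; simp [Real.norm_eq_abs, sq_abs]
        rw [hxt]
        have hsum : (∑ i, (x i - t i) ^ 2) ≤ (n : ℝ) * (D * 2 ^ m) ^ 2 := by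
          calc (∑ i, (x i - t i) ^ 2) ≤ ∑ _i : Fin n, (D * 2 ^ m) ^ 2 := by
                refine Finset.sum_le_sum fun i _ => ?_
                rw [← sq_abs]
                exact pow_le_pow_left₀ (abs_nonneg _) (hcoord i) 2
            _ = (n : ℝ) * (D * 2 ^ m) ^ 2 := by
                rw [Finset.sum_const, nsmul_eq_mul, Finset.card_univ, Fintype.card_fin]
        calc Real.sqrt (∑ i, (x i - t i) ^ 2) ≤ Real.sqrt ((n : ℝ) * (D * 2 ^ m) ^ 2) :=
              Real.sqrt_le_sqrt hsum
          _ = Real.sqrt n * (D * 2 ^ m) := by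
              rw [Real.sqrt_mul hn0.le, Real.sqrt_sq (by positivity)]
          _ = E * 2 ^ m := by rw [hE_def]; ring
      have hpos : 0 < ‖x - t‖ := by
        have hi0 : (0 : ℕ) < n - 2 := by omega
        set i0 : Fin n := ⟨0, by omega⟩ with hi0_def
        have h1 := ht i0
        simp only [slabBox, hi0_def, hi0, if_true, Set.mem_Ioo] at h1
        have hne : x - t ≠ 0 := by
          intro hzero
          have : (x - t) i0 = 0 := by rw [hzero]; rfl
          have : x i0 - t i0 = 0 := this
          have h2m0' : (0:ℝ) < 2 ^ m := by positivity
          linarith [h1.1]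
        exact norm_pos_iff.mpr hne
      simp only [hf_def]
      apply ENNReal.ofReal_le_ofReal
      apply one_div_le_one_div_of_le (Real.rpow_pos_of_pos hpos p)
      exact Real.rpow_le_rpow hpos.le hnorm_le hp.le
    calc ENNReal.ofReal ε
        = ENNReal.ofReal (1 / (E * 2 ^ m) ^ p) * volume (B m) := by
          rw [hvol m, ← ENNReal.ofReal_mul (by positivity)]
          congr 1
          have hmul : (E * 2 ^ m) ^ p = E ^ p * ((2:ℝ) ^ m) ^ p :=
            Real.mul_rpow hE0.le (by positivity)
          have hnat : ((2:ℝ) ^ m) ^ (n - 2) = ((2:ℝ) ^ m) ^ p := by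
            rw [← hpcast, Real.rpow_natCast]
          rw [hmul, hnat, hε_def]
          have hEp : (0:ℝ) < E ^ p := Real.rpow_pos_of_pos hE0 p
          have h2mp : (0:ℝ) < ((2:ℝ) ^ m) ^ p := Real.rpow_pos_of_pos h2m0 p
          field_simp
      _ ≤ ∫⁻ t in B m, f t := by
          rw [← setLIntegral_const (B m) (ENNReal.ofReal (1 / (E * 2 ^ m) ^ p))]
          exact setLIntegral_mono' (hBmeas m) hbound
  -- conclude
  refine top_le_iff.mp ?_
  calc (⊤ : ENNReal) = ∑' _ : ℕ, ENNReal.ofReal ε :=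
        (ENNReal.tsum_const_eq_top_of_ne_zero (ne_of_gt (ENNReal.ofReal_pos.mpr hε0))).symm
    _ ≤ ∑' m : ℕ, ∫⁻ t in B m, f t := ENNReal.tsum_le_tsum key
    _ = ∫⁻ t in ⋃ m, B m, f t := (lintegral_iUnion hBmeas hdisj f).symm
    _ ≤ ∫⁻ t in {t : EuclideanSpace ℝ (Fin n) | zNorm k t < 1}, f t :=
        lintegral_mono_set (Set.iUnion_subset hsub)
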